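/- Let G be a finite powerful p-group, x ∈ G^p and y ∈ G. Then the commutator (x,y) = x⁻¹y⁻¹xy belongs to G^{p²}. -/

import Mathlib

open Subgroup
open scoped commutatorElement

/-- The subgroup generated by all `k`-th powers. -/
def PW (G : Type*) [Group G] (k : ℕ) : Subgroup G :=
  Subgroup.closure (Set.range fun g : G => g ^ k)

section Basic

variable {G : Type*} [Group G]

theorem closure_normal_of_conj {S : Set G}
    (h : ∀ (g : G), ∀ x ∈ S, g * x * g⁻¹ ∈ S) : (Subgroup.closure S).Normal := by
  constructor
  intro x hx g
  induction hx using Subgroup.closure_induction with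
  | mem y hy => exact Subgroup.subset_closure (h g y hy)
  | one => simpa using (Subgroup.closure S).one_mem
  | mul a b _ _ ha hb =>
    have key : g * (a * b) * g⁻¹ = (g * a * g⁻¹) * (g * b * g⁻¹) := by group
    rw [key]; exact mul_mem ha hb
  | inv a _ ha =>
    have key : g * a⁻¹ * g⁻¹ = (g * a * g⁻¹)⁻¹ := by group
    rw [key]; exact inv_mem ha

theorem PW_normal (k : ℕ) : (PW G k).Normal := by
  apply closure_normal_of_conj
  rintro g x ⟨h, rfl⟩
  exact ⟨g * h * g⁻¹, conj_pow⟩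

theorem map_PW {H : Type*} [Group H] (f : G →* H) (hf : Function.Surjective f) (k : ℕ) :
    (PW G k).map f = PW H k := by
  rw [PW, PW, MonoidHom.map_closure]
  congr 1
  ext y
  constructor
  · rintro ⟨-, ⟨g, rfl⟩, rfl⟩
    exact ⟨f g, (map_pow f g k).symm⟩
  · rintro ⟨h, rfl⟩
    obtain ⟨g, rfl⟩ := hf h
    exact ⟨g ^ k, ⟨g, rfl⟩, map_pow f g k⟩

theorem conj_pow_eq (x c w : G) (hw : w = ⁅x, c⁆) (hcen : ∀ g : G, Commute w g) (n : ℕ) :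
    x * c ^ n * x⁻¹ = w ^ n * c ^ n := by
  induction n with
  | zero => simp
  | succ n ih =>
    have h1 : x * c * x⁻¹ = w * c := by rw [hw, commutatorElement_def]; group
    have h2 : x * c ^ (n + 1) * x⁻¹ = (x * c ^ n * x⁻¹) * (x * c * x⁻¹) := by
      rw [pow_succ]; group
    rw [h2, ih, h1]
    have h3 : Commute w (c ^ n) := hcen _
    calc w ^ n * c ^ n * (w * c) = w ^ n * (c ^ n * w) * c := by group
      _ = w ^ n * (w * c ^ n) * c := by rw [h3.symm.eq]
      _ = w ^ (n + 1) * c ^ (n + 1) := by rw [pow_succ, pow_succ]; group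

theorem comm_pow (x y c w : G) (hc : c = ⁅x, y⁆) (hw : w = ⁅x, c⁆)
    (hcen : ∀ g : G, Commute w g) (n : ℕ) :
    ⁅x ^ n, y⁆ = c ^ n * w ^ (n.choose 2) := by
  induction n with
  | zero => simp
  | succ n ih =>
    have key : ⁅x ^ (n + 1), y⁆ = x * ⁅x ^ n, y⁆ * x⁻¹ * ⁅x, y⁆ := by
      rw [pow_succ']
      generalize x ^ n = b
      rw [commutatorElement_def, commutatorElement_def, commutatorElement_def]
      group
    rw [key, ih, ← hc]
    have h2 : x * w ^ n.choose 2 * x⁻¹ = w ^ n.choose 2 := by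
      have h := ((hcen x).pow_left (n.choose 2)).eq
      rw [← h]; group
    have h1 : x * (c ^ n * w ^ n.choose 2) * x⁻¹
        = (x * c ^ n * x⁻¹) * (x * w ^ n.choose 2 * x⁻¹) := by group
    have h3 : x * c ^ n * x⁻¹ = w ^ n * c ^ n := conj_pow_eq x c w hw hcen n
    have hch : (n + 1).choose 2 = n.choose 2 + n := by
      rw [Nat.choose_succ_succ n 1, Nat.choose_one_right, Nat.add_comm]
    rw [h1, h2, h3, hch]
    have h4 : Commute (w ^ n) (c ^ n) := (hcen _).pow_left n
    calc w ^ n * c ^ n * w ^ n.choose 2 * c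
        = (w ^ n * c ^ n) * (w ^ n.choose 2 * c) := by group
      _ = (c ^ n * w ^ n) * (c * w ^ n.choose 2) := by
          rw [h4.eq, ((hcen c).pow_left (n.choose 2)).eq]
      _ = c ^ n * (w ^ n * c) * w ^ n.choose 2 := by group
      _ = c ^ n * (c * w ^ n) * w ^ n.choose 2 := by rw [((hcen c).pow_left n).eq]
      _ = c ^ (n + 1) * (w ^ n.choose 2 * w ^ n) := by rw [pow_succ]; group
      _ = c ^ (n + 1) * w ^ (n.choose 2 + n) := by rw [pow_add w]


theorem mul_pow_comm (u v z : G) (hz : z = ⁅v, u⁆) (hcen : ∀ g : G, Commute z g) (n : ℕ) :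
    (u * v) ^ n = u ^ n * v ^ n * z ^ (n.choose 2) := by
  have swap : ∀ m : ℕ, v ^ m * u = z ^ m * u * v ^ m := by
    intro m
    induction m with
    | zero => simp
    | succ m ih =>
      have h1 : v * u = z * u * v := by rw [hz, commutatorElement_def]; group
      calc v ^ (m + 1) * u = v * (v ^ m * u) := by rw [pow_succ']; group
        _ = v * (z ^ m * u * v ^ m) := by rw [ih]
        _ = (v * z ^ m) * u * v ^ m := by group
        _ = (z ^ m * v) * u * v ^ m := by rw [((hcen v).pow_left m).symm.eq]
        _ = z ^ m * (v * u) * v ^ m := by group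
        _ = z ^ m * (z * u * v) * v ^ m := by rw [h1]
        _ = (z ^ m * z) * u * (v * v ^ m) := by group
        _ = z ^ (m + 1) * u * v ^ (m + 1) := by rw [pow_succ, pow_succ']
  induction n with
  | zero => simp
  | succ n ih =>
    have hch : (n + 1).choose 2 = n.choose 2 + n := by
      rw [Nat.choose_succ_succ n 1, Nat.choose_one_right, Nat.add_comm]
    calc (u * v) ^ (n + 1) = (u * v) ^ n * (u * v) := by rw [pow_succ]
      _ = u ^ n * v ^ n * z ^ n.choose 2 * (u * v) := by rw [ih]
      _ = u ^ n * v ^ n * (z ^ n.choose 2 * u) * v := by group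
      _ = u ^ n * v ^ n * (u * z ^ n.choose 2) * v := by
          rw [((hcen u).pow_left (n.choose 2)).eq]
      _ = u ^ n * (v ^ n * u) * (z ^ n.choose 2 * v) := by group
      _ = u ^ n * (z ^ n * u * v ^ n) * (z ^ n.choose 2 * v) := by rw [swap n]
      _ = (u ^ n * z ^ n) * (u * (v ^ n * (z ^ n.choose 2 * v))) := by group
      _ = (z ^ n * u ^ n) * (u * (v ^ n * (z ^ n.choose 2 * v))) := by
          rw [((hcen _).pow_left n).symm.eq]
      _ = z ^ n * (u ^ n * u) * ((v ^ n * z ^ n.choose 2) * v) := by group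
      _ = z ^ n * (u ^ n * u) * ((z ^ n.choose 2 * v ^ n) * v) := by
          rw [((hcen _).pow_left (n.choose 2)).eq]
      _ = z ^ n * u ^ (n + 1) * (z ^ n.choose 2 * v ^ (n + 1)) := by
          rw [pow_succ, pow_succ]; group
      _ = (u ^ (n + 1) * z ^ n) * (z ^ n.choose 2 * v ^ (n + 1)) := by
          rw [((hcen _).pow_left n).eq]
      _ = u ^ (n + 1) * (z ^ n * z ^ n.choose 2) * v ^ (n + 1) := by group
      _ = u ^ (n + 1) * (v ^ (n + 1) * (z ^ n * z ^ n.choose 2)) := by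
          rw [mul_assoc,
            (Commute.mul_left ((hcen _).pow_left n) ((hcen _).pow_left (n.choose 2))).eq]
      _ = u ^ (n + 1) * (v ^ (n + 1) * z ^ (n + n.choose 2)) := by rw [pow_add z]
      _ = u ^ (n + 1) * v ^ (n + 1) * z ^ ((n + 1).choose 2) := by
          rw [hch, Nat.add_comm (n.choose 2) n, mul_assoc]

end Basic

section FrattiniStep

variable {p : ℕ}

/-- In a finite p-group, a subgroup of pairwise-commuting elements consisting of p-th powers
of its own elements is trivial. -/
theorem self_gen_bot {Q : Type*} [Group Q] [Finite Q] (hp : p.Prime) (hpQ : IsPGroup p Q)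
    (H : Subgroup Q) (hcomm : ∀ a ∈ H, ∀ b ∈ H, Commute a b)
    (h : H ≤ Subgroup.closure ((fun z : Q => z ^ p) '' H)) : H = ⊥ := by
  haveI : Fact p.Prime := ⟨hp⟩
  let T : Subgroup Q :=
    { carrier := (fun z : Q => z ^ p) '' (H : Set Q)
      one_mem' := ⟨1, H.one_mem, one_pow p⟩
      mul_mem' := by
        rintro a b ⟨a', ha', rfl⟩ ⟨b', hb', rfl⟩
        exact ⟨a' * b', H.mul_mem ha' hb', by simpa using (hcomm a' ha' b' hb').mul_pow p⟩
      inv_mem' := by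
        rintro a ⟨a', ha', rfl⟩
        exact ⟨a'⁻¹, H.inv_mem ha', by simp⟩ }
  have hT : H ≤ T := le_trans h ((Subgroup.closure_le T).mpr le_rfl)
  have hsurj : Function.Surjective (fun x : H => x ^ p) := by
    intro x
    obtain ⟨a, ha, hap⟩ := hT x.2
    exact ⟨⟨a, ha⟩, Subtype.ext (by simpa using hap)⟩
  have hinj : Function.Injective (fun x : H => x ^ p) :=
    (Finite.injective_iff_surjective).mpr hsurj
  by_contra hne
  obtain ⟨x, hx1⟩ := Subgroup.ne_bot_iff_exists_ne_one.mp hne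
  obtain ⟨k, hk⟩ := IsPGroup.iff_orderOf.mp (hpQ.to_subgroup H) x
  have hk0 : k ≠ 0 := by
    rintro rfl
    rw [pow_zero] at hk
    exact hx1 (orderOf_eq_one_iff.mp hk)
  set y : H := x ^ (p ^ (k - 1)) with hy
  have hyp : y ^ p = 1 := by
    rw [hy, ← pow_mul, ← pow_succ,
      Nat.sub_add_cancel (Nat.one_le_iff_ne_zero.mpr hk0), ← hk, pow_orderOf_eq_one]
  have hy1 : y ≠ 1 := by
    intro hy1
    have hdvd : orderOf x ∣ p ^ (k - 1) := orderOf_dvd_of_pow_eq_one (by rw [← hy, hy1])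
    rw [hk] at hdvd
    have hle := Nat.le_of_dvd (pow_pos hp.pos _) hdvd
    have hlt : p ^ (k - 1) < p ^ k :=
      Nat.pow_lt_pow_right hp.one_lt (Nat.sub_lt (Nat.pos_of_ne_zero hk0) one_pos)
    omega
  apply hy1
  apply hinj
  show y ^ p = (1 : H) ^ p
  rw [hyp, one_pow]

/-- If Z is normal in a finite p-group G and Z ≤ [Z,G]·Zᵖ, then Z is trivial. -/
theorem frattini_arg {G : Type*} [Group G] [Finite G] (hp : p.Prime) (hpG : IsPGroup p G)
    (Z : Subgroup G) (hZ : Z.Normal)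
    (h : Z ≤ ⁅Z, (⊤ : Subgroup G)⁆ ⊔ Subgroup.closure ((fun z : G => z ^ p) '' Z)) :
    Z = ⊥ := by
  haveI : Fact p.Prime := ⟨hp⟩
  haveI := hZ
  haveI hMn : (⁅Z, (⊤ : Subgroup G)⁆ : Subgroup G).Normal := Subgroup.commutator_normal Z ⊤
  set M : Subgroup G := ⁅Z, (⊤ : Subgroup G)⁆ with hM
  have hMZ : M ≤ Z := Subgroup.commutator_le_left Z ⊤
  set π := QuotientGroup.mk' M with hπ
  have hπsurj : Function.Surjective π := QuotientGroup.mk'_surjective M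
  set Zb := Z.map π with hZb
  have hcomm : ∀ a ∈ Zb, ∀ b ∈ Zb, Commute a b := by
    rintro - ⟨a, ha, rfl⟩ - ⟨b, hb, rfl⟩
    rw [← commutatorElement_eq_one_iff_commute, ← map_commutatorElement]
    have hm : ⁅a, b⁆ ∈ M := Subgroup.commutator_mem_commutator ha (Subgroup.mem_top b)
    rwa [← QuotientGroup.ker_mk' M, MonoidHom.mem_ker] at hm
  have hle : Zb ≤ Subgroup.closure ((fun z : G ⧸ M => z ^ p) '' Zb) := by
    rw [hZb]
    refine le_trans (Subgroup.map_mono h) ?_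
    rw [Subgroup.map_sup]
    apply sup_le
    · rw [(Subgroup.map_eq_bot_iff _).mpr (show M ≤ π.ker by rw [hπ, QuotientGroup.ker_mk'])]
      exact bot_le
    · rw [MonoidHom.map_closure]
      apply Subgroup.closure_mono
      rintro t ⟨-, ⟨z, hz, rfl⟩, rfl⟩
      exact ⟨π z, ⟨z, hz, rfl⟩, (map_pow π z p).symm⟩
  have hZbbot : Zb = ⊥ := self_gen_bot hp (IsPGroup.to_quotient hpG M) Zb hcomm hle
  have hZM : Z ≤ M := by
    intro z hz
    have hmem : π z ∈ Zb := ⟨z, hz, rfl⟩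
    rw [hZbbot, Subgroup.mem_bot] at hmem
    rw [← QuotientGroup.ker_mk' M, MonoidHom.mem_ker]
    exact hmem
  have hZeq : Z = ⁅Z, (⊤ : Subgroup G)⁆ := le_antisymm hZM hMZ
  have hlcs : ∀ n, Z ≤ Subgroup.lowerCentralSeries ⊤ n := by
    intro n
    induction n with
    | zero => exact le_top
    | succ n ih =>
      rw [Subgroup.lowerCentralSeries_succ]
      calc Z = ⁅Z, (⊤ : Subgroup G)⁆ := hZeq
        _ ≤ ⁅Subgroup.lowerCentralSeries ⊤ n, (⊤ : Subgroup G)⁆ := Subgroup.commutator_mono ih le_rfl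
  haveI : Group.IsNilpotent G := hpG.isNilpotent
  obtain ⟨n, hn⟩ := Subgroup.nilpotent_iff_lowerCentralSeries.mp this
  exact le_bot_iff.mp (hn ▸ hlcs n)

end FrattiniStep

section Main

universe u

/-- Main induction: for a finite powerful p-group (p odd), [Gᵖ, G] ≤ G^(p²). -/
theorem powerful_aux : ∀ (n : ℕ) {G : Type u} [Group G] [Finite G], Nat.card G ≤ n →
    ∀ (p : ℕ), p.Prime → 2 < p → IsPGroup p G →
    ⁅(⊤ : Subgroup G), (⊤ : Subgroup G)⁆ ≤ PW G p →
    ⁅PW G p, (⊤ : Subgroup G)⁆ ≤ PW G (p ^ 2) := by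
  intro n
  induction n with
  | zero =>
    intro G _ _ hcard
    exact absurd (Nat.le_zero.mp hcard) Nat.card_pos.ne'
  | succ n ih =>
    intro G _ _ hcard p hp hp2 hpG hpow
    haveI : Fact p.Prime := ⟨hp⟩
    haveI hK_normal : (PW G (p ^ 2)).Normal := PW_normal _
    haveI hP1_normal : (PW G p).Normal := PW_normal _
    -- generic quotient step
    have quot_step : ∀ (N : Subgroup G), N.Normal → N ≠ ⊥ → PW G (p ^ 2) ≤ N →
        ⁅PW G p, (⊤ : Subgroup G)⁆ ≤ N := by
      intro N hN hNbot hKN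
      haveI := hN
      set π := QuotientGroup.mk' N with hπdef
      have hπsurj : Function.Surjective π := QuotientGroup.mk'_surjective N
      have hcard' : Nat.card (G ⧸ N) ≤ n := by
        have h1 : Nat.card G = Nat.card (G ⧸ N) * Nat.card N :=
          Subgroup.card_eq_card_quotient_mul_card_subgroup N
        have h2 : 1 < Nat.card N := (Subgroup.one_lt_card_iff_ne_bot N).mpr hNbot
        have h3 : 0 < Nat.card (G ⧸ N) := Nat.card_pos
        have h4 : Nat.card (G ⧸ N) < Nat.card G := by
          rw [h1]
          exact lt_mul_of_one_lt_right h3 h2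
        omega
      have hpow' : ⁅(⊤ : Subgroup (G ⧸ N)), (⊤ : Subgroup (G ⧸ N))⁆ ≤ PW (G ⧸ N) p := by
        rw [← Subgroup.map_top_of_surjective π hπsurj, ← Subgroup.map_commutator,
          ← map_PW π hπsurj]
        exact Subgroup.map_mono hpow
      have hres := ih hcard' p hp hp2 (IsPGroup.to_quotient hpG N) hpow'
      have hbot : PW (G ⧸ N) (p ^ 2) = ⊥ := by
        rw [← map_PW π hπsurj, Subgroup.map_eq_bot_iff]
        rw [QuotientGroup.ker_mk']
        exact hKN
      rw [Subgroup.commutator_le]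
      intro u hu y _
      have hmem : π ⁅u, y⁆ ∈ PW (G ⧸ N) (p ^ 2) := by
        rw [map_commutatorElement]
        refine hres (Subgroup.commutator_mem_commutator ?_ (Subgroup.mem_top _))
        rw [← map_PW π hπsurj]
        exact Subgroup.mem_map_of_mem π hu
      rw [hbot, Subgroup.mem_bot] at hmem
      rw [← QuotientGroup.ker_mk' N, MonoidHom.mem_ker]
      exact hmem
    by_cases hK : PW G (p ^ 2) = ⊥
    · -- case G^(p²) = 1
      haveI hZnormal : (⁅PW G p, (⊤ : Subgroup G)⁆ : Subgroup G).Normal :=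
        Subgroup.commutator_normal _ _
      set Z : Subgroup G := ⁅PW G p, (⊤ : Subgroup G)⁆ with hZdef
      haveI hZpnormal : (Subgroup.closure ((fun z : G => z ^ p) '' Z)).Normal := by
        apply closure_normal_of_conj
        rintro g - ⟨z, hz, rfl⟩
        exact ⟨g * z * g⁻¹, hZnormal.conj_mem z hz g, conj_pow⟩
      set Zp : Subgroup G := Subgroup.closure ((fun z : G => z ^ p) '' Z) with hZpdef
      haveI hLnormal : (⁅Z, (⊤ : Subgroup G)⁆ ⊔ Zp).Normal := Subgroup.sup_normal _ _
      set L : Subgroup G := ⁅Z, (⊤ : Subgroup G)⁆ ⊔ Zp with hLdef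
      by_cases hL : L = ⊥
      · -- base case: Z is central of exponent p
        have hZcen : ∀ z ∈ Z, ∀ g : G, Commute z g := by
          intro z hz g
          rw [← commutatorElement_eq_one_iff_commute, ← Subgroup.mem_bot, ← hL]
          exact Subgroup.mem_sup_left (Subgroup.commutator_mem_commutator hz (Subgroup.mem_top g))
        have hZexp : ∀ z ∈ Z, z ^ p = 1 := by
          intro z hz
          rw [← Subgroup.mem_bot, ← hL]
          exact Subgroup.mem_sup_right (Subgroup.subset_closure ⟨z, hz, rfl⟩)
        have hgp2 : ∀ g : G, g ^ (p ^ 2) = 1 := by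
          intro g
          rw [← Subgroup.mem_bot, ← hK]
          exact Subgroup.subset_closure ⟨g, rfl⟩
        obtain ⟨k, hk⟩ : ∃ k, p - 1 = 2 * k := by
          obtain ⟨m, hm⟩ := hp.odd_of_ne_two (by omega)
          exact ⟨m, by omega⟩
        have hchoose : p.choose 2 = p * k := by
          rw [Nat.choose_two_right, hk]
          have h5 : p * (2 * k) = p * k * 2 := by ring
          rw [h5, Nat.mul_div_cancel _ (by norm_num)]
        have hzc2 : ∀ z ∈ Z, z ^ (p.choose 2) = 1 := by
          intro z hz
          rw [hchoose, pow_mul, hZexp z hz, one_pow]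
        -- step 1 : every element of G^p has order dividing p
        have hS1 : ∀ u ∈ PW G p, u ^ p = 1 := by
          intro u hu
          induction hu using Subgroup.closure_induction with
          | mem g hg =>
            obtain ⟨g, rfl⟩ := hg
            have h6 := hgp2 g
            rwa [pow_two, pow_mul] at h6
          | one => rw [one_pow]
          | mul a b ha hb iha ihb =>
            have hzZ : ⁅b, a⁆ ∈ Z :=
              Subgroup.commutator_mem_commutator hb (Subgroup.mem_top a)
            rw [mul_pow_comm a b ⁅b, a⁆ rfl (hZcen _ hzZ) p, iha, ihb,
              hzc2 _ hzZ, one_mul, one_mul]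
          | inv a ha iha => rw [inv_pow, iha, inv_one]
        -- step 2 : p-th powers are central
        have key : ∀ x y : G, ⁅x ^ p, y⁆ = 1 := by
          intro x y
          have hcP1 : ⁅x, y⁆ ∈ PW G p :=
            hpow (Subgroup.commutator_mem_commutator (Subgroup.mem_top x) (Subgroup.mem_top y))
          have hwZ : ⁅x, ⁅x, y⁆⁆ ∈ Z := by
            have h7 : ⁅x, ⁅x, y⁆⁆ ∈ ⁅(⊤ : Subgroup G), PW G p⁆ :=
              Subgroup.commutator_mem_commutator (Subgroup.mem_top x) hcP1
            rwa [Subgroup.commutator_comm] at h7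
          rw [comm_pow x y ⁅x, y⁆ ⁅x, ⁅x, y⁆⁆ rfl rfl (hZcen _ hwZ) p,
            hS1 _ hcP1, hzc2 _ hwZ, one_mul]
        rw [hZdef, Subgroup.commutator_le]
        intro u hu y _
        suffices hcom : ⁅u, y⁆ = 1 by rw [hcom]; exact (PW G (p ^ 2)).one_mem
        rw [commutatorElement_eq_one_iff_commute]
        have hcent : PW G p ≤ Subgroup.centralizer {y} := by
          rw [PW, Subgroup.closure_le]
          rintro - ⟨x, rfl⟩
          rw [SetLike.mem_coe, Subgroup.mem_centralizer_iff]
          intro h hh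
          rw [Set.mem_singleton_iff] at hh
          rw [hh]
          have h8 := key x y
          rw [commutatorElement_eq_one_iff_commute] at h8
          exact h8.symm.eq
        have h9 := hcent hu
        rw [Subgroup.mem_centralizer_iff] at h9
        exact Commute.symm (h9 y (Set.mem_singleton y))
      · -- quotient by L, then Frattini argument
        have hZL : Z ≤ L := quot_step L hLnormal hL (hK ▸ bot_le)
        have hZbot : Z = ⊥ := by
          apply frattini_arg hp hpG Z hZnormal
          exact hZL
        rw [hZbot]
        exact bot_le
    · exact quot_step _ hK_normal hK (le_refl _)

end Main

/-- Let G be a finite powerful p-group (p > 2), x ∈ G^p and y ∈ G.  Then the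
commutator (x,y) = x⁻¹y⁻¹xy lies in G^{p²}. -/
theorem stmt14 {G : Type*} [Group G] [Fintype G] (p : ℕ) (hp : p.Prime) (hp2 : 2 < p)
    (hpG : IsPGroup p G)
    (hpow : ⁅(⊤ : Subgroup G), (⊤ : Subgroup G)⁆ ≤
      Subgroup.closure (Set.range fun g : G => g ^ p))
    (x y : G) (hx : x ∈ Subgroup.closure (Set.range fun g : G => g ^ p)) :
    x⁻¹ * y⁻¹ * x * y ∈ Subgroup.closure (Set.range fun g : G => g ^ (p ^ 2)) := by
  have main := powerful_aux (Nat.card G) le_rfl p hp hp2 hpG hpow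
  have hmem : ⁅x⁻¹, y⁻¹⁆ ∈ PW G (p ^ 2) :=
    main (Subgroup.commutator_mem_commutator (inv_mem hx) (Subgroup.mem_top y⁻¹))
  have heq : x⁻¹ * y⁻¹ * x * y = ⁅x⁻¹, y⁻¹⁆ := by
    rw [commutatorElement_def]
    group
  rw [heq]
  exact hmem
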